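/- Let R be a commutative ring of characteristic p^e (e ≥ 1), G a group, and g ∈ G an element of finite p-power order. Then in the group ring RG, for any l ≥ e and any s with 0 ≤ s ≤ l − e + 1, one has (1 − g)^(p^l) = (1 − g^(p^s))^(p^(l−s)). -/

import Mathlib

open MonoidAlgebra

private lemma key {S : Type*} [CommRing S] {p e : ℕ} (hp : p.Prime) (he : 1 ≤ e)
    [CharP S (p ^ e)] (x : S) {m : ℕ} (hm : e ≤ m) :
    (1 - x) ^ (p ^ m) = (1 - x ^ p) ^ (p ^ (m - 1)) := by
  have h1 : (p : S) ∣ (1 - x) ^ p - (1 - x ^ p) := by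
    obtain ⟨r, hr⟩ : ∃ r, (1 + -x) ^ p = 1 ^ p + (-x) ^ p + p * r := by
      obtain ⟨r, hr⟩ := exists_add_pow_prime_eq hp (1 : S) (-x); exact ⟨1 * -x * r, by rw [hr]; ring⟩
    have : (1 - x) ^ p = 1 + (-x) ^ p + p * r := by
      rw [sub_eq_add_neg, hr, one_pow]
    rcases hp.eq_two_or_odd' with h2 | hodd
    · subst h2
      refine ⟨x ^ 2 + r, ?_⟩
      rw [this]; ring_nf
    · rw [this, hodd.neg_pow]
      exact ⟨r, by ring⟩
  have h2 := dvd_sub_pow_of_dvd_sub h1 (m - 1)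
  rw [Nat.sub_add_cancel (he.trans hm)] at h2
  have hz : (p : S) ^ m = 0 := by
    have : ((p ^ e : ℕ) : S) = 0 := CharP.cast_eq_zero S (p ^ e)
    push_cast at this
    calc (p : S) ^ m = (p : S) ^ e * (p : S) ^ (m - e) := by
          rw [← pow_add, Nat.add_sub_cancel' hm]
      _ = 0 := by rw [this, zero_mul]
  rw [hz] at h2
  have := (zero_dvd_iff.mp h2)
  have heq : ((1 - x) ^ p) ^ p ^ (m - 1) = (1 - x ^ p) ^ p ^ (m - 1) := by
    linear_combination this
  rw [← heq, ← pow_mul, ← pow_succ', Nat.sub_add_cancel (he.trans hm)]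

private lemma polykey {R : Type*} [CommRing R] {p e : ℕ} (hp : p.Prime) (he : 1 ≤ e)
    [CharP R (p ^ e)] (l s : ℕ) (hl : e ≤ l) (hs : s ≤ l - e + 1) :
    (1 - Polynomial.X : Polynomial R) ^ (p ^ l)
      = (1 - Polynomial.X ^ (p ^ s)) ^ (p ^ (l - s)) := by
  induction s with
  | zero => simp
  | succ s ih =>
    have hs' : s ≤ l - e + 1 := by omega
    have hm : e ≤ l - s := by omega
    rw [ih hs', key hp he _ hm, ← pow_mul, ← pow_succ, Nat.sub_sub]

theorem stmt_1 (p e : ℕ) (hp : p.Prime) (he : 1 ≤ e)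
    (R : Type*) [CommRing R] [CharP R (p ^ e)]
    (G : Type*) [Group G] (g : G) (hg : ∃ m : ℕ, g ^ (p ^ m) = 1)
    (l s : ℕ) (hl : e ≤ l) (hs : s ≤ l - e + 1) :
    (1 - MonoidAlgebra.of R G g) ^ (p ^ l) =
      (1 - MonoidAlgebra.of R G (g ^ (p ^ s))) ^ (p ^ (l - s)) := by
  have h := polykey (R := R) hp he l s hl hs
  have := congrArg (Polynomial.aeval (MonoidAlgebra.of R G g)) h
  simpa [map_pow, map_sub, map_one] using this
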